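/- For all natural numbers a, b, all integers i, and all λ, μ ∈ [0,1], one has sqrt(a·λ(1-λ) + b·μ(1-μ)) · Σ_{k=0}^i B^a_k(λ) · B^b_{i-k}(μ) ≤ 1/√e. -/

import Mathlib

open Real intervalIntegral MeasureTheory Finset

noncomputable def cf (n : ℕ) (p : ℝ) (k : ℕ) : ℝ :=
  (n.choose k) * p ^ k * (1 - p) ^ (n - k)

/-- Binomial probabilities `Bⁿₖ(p) = C(n,k) pᵏ (1-p)ⁿ⁻ᵏ`, defined to be `0` for
`k < 0` or `k > n`. -/
noncomputable def B (n : ℕ) (k : ℤ) (p : ℝ) : ℝ :=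
  if 0 ≤ k ∧ k ≤ (n : ℤ) then
    (n.choose k.toNat : ℝ) * p ^ k.toNat * (1 - p) ^ (n - k.toNat) else 0

lemma ortho (m : ℤ) : (∫ θ : ℝ in (-π)..π, Complex.exp (m * θ * Complex.I))
    = if m = 0 then (2 * π : ℂ) else 0 := by
  split_ifs with h
  · subst h
    simp; ring
  · have hc : (m : ℂ) * Complex.I ≠ 0 := by
      simp [Complex.ext_iff, Complex.I_ne_zero]
      exact_mod_cast h
    have := integral_exp_mul_complex (a := (-π)) (b := π) hc
    have heq : (fun θ : ℝ => Complex.exp (m * θ * Complex.I))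
        = fun θ : ℝ => Complex.exp ((m * Complex.I) * θ) := by
      funext θ; ring_nf
    rw [heq, this]
    have h1 : Complex.exp ((m:ℂ) * Complex.I * π) = (-1 : ℂ) ^ m := by
      rw [show (m:ℂ) * Complex.I * π = m * (π * Complex.I) by ring,
        Complex.exp_int_mul, Complex.exp_pi_mul_I]
    have h2 : Complex.exp ((m:ℂ) * Complex.I * ((-π : ℝ) : ℂ)) = (-1 : ℂ) ^ (-m) := by
      rw [show (m:ℂ) * Complex.I * ((-π : ℝ) : ℂ) = ((-m : ℤ) : ℂ) * (π * Complex.I) by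
        push_cast; ring, Complex.exp_int_mul, Complex.exp_pi_mul_I]
    rw [h1, h2, zpow_neg]
    simp only [div_eq_zero_iff]
    left
    rw [← inv_zpow, inv_neg, inv_one]
    ring

lemma expand (n : ℕ) (p : ℝ) (θ : ℝ) :
    (((1 - p : ℝ) : ℂ) + (p:ℂ) * Complex.exp (θ * Complex.I)) ^ n
    = ∑ k ∈ range (n+1), (cf n p k : ℂ) * Complex.exp (k * θ * Complex.I) := by
  rw [show ((1 - p : ℝ) : ℂ) + (p:ℂ) * Complex.exp (θ * Complex.I)
      = (p:ℂ) * Complex.exp (θ * Complex.I) + ((1-p:ℝ):ℂ) by ring, add_pow]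
  refine Finset.sum_congr rfl fun k hk => ?_
  rw [mul_pow, ← Complex.exp_nat_mul]
  simp only [cf]
  push_cast
  ring

lemma B_coe (n : ℕ) (k : ℕ) (hk : k ≤ n) (p : ℝ) : B n (k : ℤ) p = cf n p k := by
  simp [B, cf, hk]

lemma innerB_sum (b : ℕ) (mu : ℝ) (j : ℤ) :
    (∑ l ∈ range (b+1), if (l : ℤ) = j then cf b mu l else 0) = B b j mu := by
  by_cases hj : 0 ≤ j ∧ j ≤ (b : ℤ)
  · obtain ⟨hj0, hjb⟩ := hj
    have h1 : ∀ l ∈ range (b+1), (if (l : ℤ) = j then cf b mu l else 0)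
        = if l = j.toNat then cf b mu l else 0 := by
      intro l _
      congr 1
      simp only [eq_iff_iff]
      omega
    rw [Finset.sum_congr rfl h1, Finset.sum_ite_eq' (range (b+1)) j.toNat (cf b mu)]
    have hmem : j.toNat ∈ range (b+1) := by
      simp [Finset.mem_range]; omega
    rw [if_pos hmem]
    have := B_coe b j.toNat (by omega) mu
    rw [← this]
    congr 1
    omega
  · have h1 : ∀ l ∈ range (b+1), (if (l : ℤ) = j then cf b mu l else 0) = 0 := by
      intro l hl
      rw [if_neg]
      simp only [Finset.mem_range] at hl
      omega
    rw [Finset.sum_congr rfl h1, B, if_neg hj]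
    simp

lemma sum_match (a b : ℕ) (i : ℤ) (lam mu : ℝ) :
    (∑ k ∈ Finset.Icc (0 : ℤ) i, B a k lam * B b (i - k) mu)
    = ∑ k ∈ range (a+1), ∑ l ∈ range (b+1),
        (if (k : ℤ) + l = i then cf a lam k * cf b mu l else 0) := by
  have hrhs : ∀ k ∈ range (a+1),
      (∑ l ∈ range (b+1), if (k : ℤ) + l = i then cf a lam k * cf b mu l else 0)
      = cf a lam k * B b (i - k) mu := by
    intro k _
    rw [← innerB_sum b mu (i - k), Finset.mul_sum]
    refine Finset.sum_congr rfl fun l _ => ?_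
    by_cases h : (l:ℤ) = i - k
    · rw [if_pos (by omega), if_pos h]
    · rw [if_neg (by omega), if_neg h, mul_zero]
  rw [Finset.sum_congr rfl hrhs]
  -- LHS manipulation
  set M : ℤ := max i a with hM
  have hsub1 : ∑ k ∈ Finset.Icc (0 : ℤ) i, B a k lam * B b (i - k) mu
      = ∑ k ∈ Finset.Icc (0 : ℤ) M, B a k lam * B b (i - k) mu := by
    apply Finset.sum_subset
    · apply Finset.Icc_subset_Icc_right; omega
    · intro k hk hk2
      simp only [Finset.mem_Icc] at hk hk2
      have : ¬ (0 ≤ i - k ∧ i - k ≤ (b:ℤ)) := by omega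
      rw [show B b (i - k) mu = 0 from by rw [B, if_neg this]]
      ring
  have hsub2 : ∑ k ∈ Finset.Icc (0 : ℤ) (a : ℤ), B a k lam * B b (i - k) mu
      = ∑ k ∈ Finset.Icc (0 : ℤ) M, B a k lam * B b (i - k) mu := by
    apply Finset.sum_subset
    · apply Finset.Icc_subset_Icc_right; omega
    · intro k hk hk2
      simp only [Finset.mem_Icc] at hk hk2
      have : ¬ (0 ≤ k ∧ k ≤ (a:ℤ)) := by omega
      rw [show B a k lam = 0 from by rw [B, if_neg this]]
      ring
  rw [hsub1, ← hsub2]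
  rw [show Finset.Icc (0:ℤ) (a:ℤ) = Finset.map ⟨Nat.cast, Nat.cast_injective⟩ (range (a+1))
    from ?_]
  · rw [Finset.sum_map]
    refine Finset.sum_congr rfl fun k hk => ?_
    simp only [Function.Embedding.coeFn_mk]
    rw [B_coe a k (by simpa [Nat.lt_succ_iff] using hk) lam]
  · ext x
    simp only [Finset.mem_Icc, Finset.mem_map, Finset.mem_range, Function.Embedding.coeFn_mk]
    constructor
    · intro ⟨h0, ha⟩; exact ⟨x.toNat, by omega, by omega⟩
    · intro ⟨y, hy, hyx⟩; omega

lemma inversion (a b : ℕ) (i : ℤ) (lam mu : ℝ) :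
    (∫ θ : ℝ in (-π)..π,
      (((1 - lam : ℝ) : ℂ) + (lam:ℂ) * Complex.exp (θ * Complex.I)) ^ a *
      ((((1 - mu : ℝ) : ℂ) + (mu:ℂ) * Complex.exp (θ * Complex.I)) ^ b *
      Complex.exp ((-i : ℤ) * θ * Complex.I)))
    = 2 * (π : ℂ) * ((∑ k ∈ range (a+1), ∑ l ∈ range (b+1),
        (if (k : ℤ) + l = i then cf a lam k * cf b mu l else 0) : ℝ) : ℂ) := by
  have hpt : ∀ θ : ℝ,
      (((1 - lam : ℝ) : ℂ) + (lam:ℂ) * Complex.exp (θ * Complex.I)) ^ a *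
      ((((1 - mu : ℝ) : ℂ) + (mu:ℂ) * Complex.exp (θ * Complex.I)) ^ b *
      Complex.exp ((-i : ℤ) * θ * Complex.I))
      = ∑ k ∈ range (a+1), ∑ l ∈ range (b+1),
          ((cf a lam k * cf b mu l : ℝ) : ℂ) *
            Complex.exp ((((k:ℤ) + l - i : ℤ) : ℂ) * θ * Complex.I) := by
    intro θ
    rw [expand a lam θ, expand b mu θ, ← mul_assoc, Finset.sum_mul_sum]
    rw [Finset.sum_mul]
    refine Finset.sum_congr rfl fun k _ => ?_
    rw [Finset.sum_mul]
    refine Finset.sum_congr rfl fun l _ => ?_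
    have : Complex.exp ((((k:ℤ) + l - i : ℤ) : ℂ) * θ * Complex.I)
        = Complex.exp (k * θ * Complex.I) * Complex.exp (l * θ * Complex.I) *
          Complex.exp ((-i : ℤ) * θ * Complex.I) := by
      rw [← Complex.exp_add, ← Complex.exp_add]
      congr 1
      push_cast
      ring
    rw [this]
    push_cast
    ring
  rw [intervalIntegral.integral_congr (g := fun θ : ℝ =>
      ∑ k ∈ range (a+1), ∑ l ∈ range (b+1),
          ((cf a lam k * cf b mu l : ℝ) : ℂ) *
            Complex.exp ((((k:ℤ) + l - i : ℤ) : ℂ) * θ * Complex.I))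
      (fun θ _ => hpt θ)]
  have h1 := intervalIntegral.integral_finset_sum (μ := volume) (a := -π) (b := π)
    (s := range (a+1)) (f := fun (k : ℕ) (θ : ℝ) =>
      ∑ l ∈ range (b+1), ((cf a lam k * cf b mu l : ℝ) : ℂ) *
        Complex.exp ((((k:ℤ) + l - i : ℤ) : ℂ) * θ * Complex.I))
    (fun k _ => by
      apply Continuous.intervalIntegrable
      apply continuous_finset_sum
      intro l _
      exact continuous_const.mul (Complex.continuous_exp.comp
        ((continuous_const.mul Complex.continuous_ofReal).mul continuous_const)))
  rw [h1]
  have : ∀ k ∈ range (a+1),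
      (∫ θ : ℝ in (-π)..π, ∑ l ∈ range (b+1),
          ((cf a lam k * cf b mu l : ℝ) : ℂ) *
            Complex.exp ((((k:ℤ) + l - i : ℤ) : ℂ) * θ * Complex.I))
      = ∑ l ∈ range (b+1), 2 * (π:ℂ) *
          ((if (k : ℤ) + l = i then cf a lam k * cf b mu l else 0 : ℝ) : ℂ) := by
    intro k _
    have h2 := intervalIntegral.integral_finset_sum (μ := volume) (a := -π) (b := π)
      (s := range (b+1)) (f := fun (l : ℕ) (θ : ℝ) =>
        ((cf a lam k * cf b mu l : ℝ) : ℂ) *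
          Complex.exp ((((k:ℤ) + l - i : ℤ) : ℂ) * θ * Complex.I))
      (fun l _ => by
        apply Continuous.intervalIntegrable
        exact continuous_const.mul (Complex.continuous_exp.comp
          ((continuous_const.mul Complex.continuous_ofReal).mul continuous_const)))
    rw [h2]
    refine Finset.sum_congr rfl fun l _ => ?_
    rw [intervalIntegral.integral_const_mul, ortho ((k:ℤ) + l - i)]
    by_cases h : (k:ℤ) + l = i
    · rw [if_pos (by omega), if_pos h]; ring
    · rw [if_neg (by omega), if_neg h]; simp
  rw [Finset.sum_congr rfl this]
  push_cast
  rw [Finset.mul_sum]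
  refine Finset.sum_congr rfl fun k _ => ?_
  rw [Finset.mul_sum]

noncomputable def cc : ℝ := (2 + Real.sqrt 2) * 8 / (9 * π^2)

lemma chord {x : ℝ} (h0 : 0 ≤ x) (h1 : x ≤ 3*π/8) :
    Real.sqrt (2 + Real.sqrt 2) / 2 / (3*π/8) * x ≤ Real.sin x := by
  have hx0 : (0:ℝ) < 3*π/8 := by positivity
  have hsin : Real.sin (3*π/8) = Real.sqrt (2 + Real.sqrt 2) / 2 := by
    rw [show 3*π/8 = π/2 - π/8 by ring, Real.sin_pi_div_two_sub, Real.cos_pi_div_eight]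
  have hcon := StrictConcaveOn.concaveOn strictConcaveOn_sin_Icc
  have hmem0 : (0:ℝ) ∈ Set.Icc (0:ℝ) π := by constructor <;> positivity
  have hmemx : (3*π/8) ∈ Set.Icc (0:ℝ) π := by
    constructor
    · positivity
    · nlinarith [Real.pi_pos]
  have hw1 : (0:ℝ) ≤ 1 - x/(3*π/8) := by
    rw [sub_nonneg, div_le_one hx0]; exact h1
  have hw2 : (0:ℝ) ≤ x/(3*π/8) := by positivity
  have hsum : (1 - x/(3*π/8)) + x/(3*π/8) = 1 := by ring
  have := hcon.2 hmem0 hmemx hw1 hw2 hsum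
  simp only [smul_eq_mul, mul_zero, zero_add, Real.sin_zero] at this
  rw [hsin] at this
  calc Real.sqrt (2 + Real.sqrt 2) / 2 / (3*π/8) * x
      = x/(3*π/8) * (Real.sqrt (2 + Real.sqrt 2) / 2) := by ring
    _ ≤ Real.sin (x/(3*π/8) * (3*π/8)) := this
    _ = Real.sin x := by rw [div_mul_cancel₀]; positivity

lemma quad {t : ℝ} (h : |t| ≤ 3*π/4) : cc * t^2 ≤ 1 - Real.cos t := by
  have h2 : 1 - Real.cos t = 2 * Real.sin (t/2)^2 := by
    have := Real.sin_sq_eq_half_sub (t/2)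
    rw [show 2*(t/2) = t by ring] at this
    linarith
  have habs : Real.sin (t/2)^2 = Real.sin (|t|/2)^2 := by
    rcases abs_cases t with ⟨he, _⟩ | ⟨he, _⟩
    · rw [he]
    · rw [he]
      rw [show -t/2 = -(t/2) by ring, Real.sin_neg]
      ring
  have hch := chord (x := |t|/2) (by positivity) (by linarith)
  have hnn : 0 ≤ Real.sqrt (2 + Real.sqrt 2) / 2 / (3*π/8) * (|t|/2) := by positivity
  have hsq := mul_self_le_mul_self hnn hch
  have hs2 : Real.sqrt (2 + Real.sqrt 2) ^ 2 = 2 + Real.sqrt 2 := by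
    rw [Real.sq_sqrt]; positivity
  rw [h2, habs]
  have hpi : (0:ℝ) < π := Real.pi_pos
  have htt : |t|^2 = t^2 := sq_abs t
  have hA : (Real.sqrt (2 + Real.sqrt 2) / 2 / (3*π/8)) * (|t|/2) *
      ((Real.sqrt (2 + Real.sqrt 2) / 2 / (3*π/8)) * (|t|/2)) = cc * t^2 / 2 := by
    have hne : π ≠ 0 := ne_of_gt hpi
    simp only [cc]
    rw [show Real.sqrt (2 + Real.sqrt 2) / 2 / (3*π/8) * (|t|/2) *
        (Real.sqrt (2 + Real.sqrt 2) / 2 / (3*π/8) * (|t|/2))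
        = Real.sqrt (2 + Real.sqrt 2)^2 * |t|^2 / (3*π/8)^2 / 16 by ring, hs2, htt]
    field_simp
    ring
  nlinarith [hsq, sq_nonneg (Real.sin (|t|/2))]

lemma tailbound {t : ℝ} (h1 : 3*π/4 ≤ |t|) (h2 : |t| ≤ π) :
    1 + Real.sqrt 2 / 2 ≤ 1 - Real.cos t := by
  have hc : Real.cos t = Real.cos |t| := by
    rcases abs_cases t with ⟨he, _⟩ | ⟨he, _⟩
    · rw [he]
    · rw [he, Real.cos_neg]
  have hpi : (0:ℝ) < π := Real.pi_pos
  have hcos34 : Real.cos (3*π/4) = -(Real.sqrt 2/2) := by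
    rw [show 3*π/4 = π - π/4 by ring, Real.cos_pi_sub, Real.cos_pi_div_four]
  have hmono := Real.strictAntiOn_cos.antitoneOn
  have h34 : (3*π/4) ∈ Set.Icc (0:ℝ) π := by
    constructor
    · positivity
    · nlinarith
  have hT : |t| ∈ Set.Icc (0:ℝ) π := ⟨abs_nonneg t, h2⟩
  have := hmono h34 hT h1
  rw [hcos34] at this
  rw [hc]
  linarith

lemma norm_factor {p : ℝ} (hp : p ∈ Set.Icc (0:ℝ) 1) (θ : ℝ) :
    ‖(((1 - p : ℝ):ℂ) + (p:ℂ) * Complex.exp (θ * Complex.I))‖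
    ≤ Real.exp (-(p * (1 - p) * (1 - Real.cos θ))) := by
  obtain ⟨hp0, hp1⟩ := hp
  rw [Complex.exp_mul_I]
  have hz : ((1-p:ℝ):ℂ) + (p:ℂ) * (Complex.cos θ + Complex.sin θ * Complex.I)
      = ((1-p+p*Real.cos θ : ℝ) : ℂ) + ((p*Real.sin θ:ℝ):ℂ)*Complex.I := by
    rw [← Complex.ofReal_cos, ← Complex.ofReal_sin]
    push_cast
    ring
  rw [hz, Complex.norm_add_mul_I]
  have hid : (1-p+p*Real.cos θ)^2 + (p*Real.sin θ)^2
      = 1 - 2*(p*(1-p))*(1-Real.cos θ) := by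
    linear_combination p^2 * (Real.sin_sq_add_cos_sq θ)
  have h1 : 1 - 2*(p*(1-p))*(1-Real.cos θ)
      ≤ Real.exp (-(2*(p*(1-p))*(1-Real.cos θ))) := by
    have := Real.add_one_le_exp (-(2*(p*(1-p))*(1-Real.cos θ)))
    linarith
  calc Real.sqrt ((1-p+p*Real.cos θ)^2 + (p*Real.sin θ)^2)
      ≤ Real.sqrt (Real.exp (-(2*(p*(1-p))*(1-Real.cos θ)))) := by
        apply Real.sqrt_le_sqrt
        rw [hid]; exact h1
    _ = Real.exp (-(p * (1 - p) * (1 - Real.cos θ))) := by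
        rw [← Real.exp_half]; congr 1; ring

lemma cc_pos : 0 < cc := by
  have : (0:ℝ) < π := Real.pi_pos
  have h2 : 0 ≤ Real.sqrt 2 := Real.sqrt_nonneg 2
  simp only [cc]
  positivity

lemma core {V : ℝ} (hV : 0 < V) :
    (∫ θ in (-π)..π, Real.exp (-(V * (1 - Real.cos θ))))
    ≤ Real.sqrt (π / (cc * V)) + (π/2) * Real.exp (-((1 + Real.sqrt 2/2) * V)) := by
  have hpi : (0:ℝ) < π := Real.pi_pos
  have hcont : Continuous fun θ : ℝ => Real.exp (-(V * (1 - Real.cos θ))) := by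
    fun_prop
  have hcontg : Continuous fun θ : ℝ => Real.exp (-(cc*V) * θ^2) := by fun_prop
  set u : ℝ := 3*π/4 with hu
  have hui : ∀ (x y : ℝ), IntervalIntegrable (fun θ : ℝ => Real.exp (-(V * (1 - Real.cos θ)))) volume x y :=
    fun x y => hcont.intervalIntegrable x y
  have hsplit2 : (∫ θ in (-u)..π, Real.exp (-(V * (1 - Real.cos θ))))
      = (∫ θ in (-u)..u, Real.exp (-(V * (1 - Real.cos θ))))
        + ∫ θ in u..π, Real.exp (-(V * (1 - Real.cos θ))) :=
    (integral_add_adjacent_intervals (hui _ _) (hui _ _)).symm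
  have hsplit1 : (∫ θ in (-π)..π, Real.exp (-(V * (1 - Real.cos θ))))
      = (∫ θ in (-π)..(-u), Real.exp (-(V * (1 - Real.cos θ))))
        + ∫ θ in (-u)..π, Real.exp (-(V * (1 - Real.cos θ))) :=
    (integral_add_adjacent_intervals (hui _ _) (hui _ _)).symm
  rw [hsplit1, hsplit2]
  have hκ : (0:ℝ) < 1 + Real.sqrt 2/2 := by
    have := Real.sqrt_nonneg 2; linarith
  -- tail bounds
  have htail1 : (∫ θ in (-π)..(-u), Real.exp (-(V * (1 - Real.cos θ))))
      ≤ (π/4) * Real.exp (-((1 + Real.sqrt 2/2) * V)) := by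
    have hmono := integral_mono_on (a := -π) (b := -u) (μ := volume)
      (f := fun θ : ℝ => Real.exp (-(V * (1 - Real.cos θ))))
      (g := fun _ : ℝ => Real.exp (-((1 + Real.sqrt 2/2) * V)))
      (by simp only [hu]; linarith) (hui _ _)
      (intervalIntegrable_const)
      (fun x hx => by
        apply Real.exp_le_exp.2
        simp only [Set.mem_Icc] at hx
        have h1 : 3*π/4 ≤ |x| := by rw [abs_of_nonpos (by linarith)]; linarith
        have h2 : |x| ≤ π := by rw [abs_of_nonpos (by linarith)]; linarith
        have := tailbound h1 h2
        nlinarith)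
    rw [intervalIntegral.integral_const] at hmono
    calc (∫ θ in (-π)..(-u), Real.exp (-(V * (1 - Real.cos θ))))
        ≤ (-u - -π) • Real.exp (-((1 + Real.sqrt 2/2) * V)) := hmono
      _ = (π/4) * Real.exp (-((1 + Real.sqrt 2/2) * V)) := by
          simp only [smul_eq_mul, hu]; ring
  have htail2 : (∫ θ in u..π, Real.exp (-(V * (1 - Real.cos θ))))
      ≤ (π/4) * Real.exp (-((1 + Real.sqrt 2/2) * V)) := by
    have hmono := integral_mono_on (a := u) (b := π) (μ := volume)
      (f := fun θ : ℝ => Real.exp (-(V * (1 - Real.cos θ))))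
      (g := fun _ : ℝ => Real.exp (-((1 + Real.sqrt 2/2) * V)))
      (by simp only [hu]; linarith) (hui _ _)
      (intervalIntegrable_const)
      (fun x hx => by
        apply Real.exp_le_exp.2
        simp only [Set.mem_Icc, hu] at hx
        have hx0 : 0 ≤ x := by linarith
        have h1 : 3*π/4 ≤ |x| := by rw [abs_of_nonneg hx0]; linarith
        have h2 : |x| ≤ π := by rw [abs_of_nonneg hx0]; linarith
        have := tailbound h1 h2
        nlinarith)
    rw [intervalIntegral.integral_const] at hmono
    calc (∫ θ in u..π, Real.exp (-(V * (1 - Real.cos θ))))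
        ≤ (π - u) • Real.exp (-((1 + Real.sqrt 2/2) * V)) := hmono
      _ = (π/4) * Real.exp (-((1 + Real.sqrt 2/2) * V)) := by
          simp only [smul_eq_mul, hu]; ring
  -- middle bound
  have hmid : (∫ θ in (-u)..u, Real.exp (-(V * (1 - Real.cos θ))))
      ≤ Real.sqrt (π / (cc * V)) := by
    have hb : 0 < cc * V := mul_pos cc_pos hV
    have hstep1 : (∫ θ in (-u)..u, Real.exp (-(V * (1 - Real.cos θ))))
        ≤ ∫ θ in (-u)..u, Real.exp (-(cc*V) * θ^2) := by
      apply integral_mono_on (by simp only [hu]; linarith) (hui _ _)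
        (hcontg.intervalIntegrable _ _)
      intro x hx
      apply Real.exp_le_exp.2
      simp only [Set.mem_Icc, hu] at hx
      have : |x| ≤ 3*π/4 := abs_le.2 ⟨by linarith, by linarith⟩
      have := quad this
      nlinarith
    have hstep2 : (∫ θ in (-u)..u, Real.exp (-(cc*V) * θ^2))
        ≤ ∫ θ : ℝ, Real.exp (-(cc*V) * θ^2) := by
      rw [intervalIntegral.integral_of_le (by simp only [hu]; linarith : -u ≤ u)]
      apply setIntegral_le_integral (integrable_exp_neg_mul_sq hb)
      filter_upwards with x using (Real.exp_pos _).le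
    rw [integral_gaussian] at hstep2
    linarith
  linarith

lemma maxlem {κ V : ℝ} (hκ : 0 < κ) (hV : 0 ≤ V) :
    Real.sqrt V * Real.exp (-(κ*V)) ≤ Real.sqrt (1/(2*κ)) * (1/Real.sqrt (Real.exp 1)) := by
  have h1 : 2*κ*V * Real.exp (-(2*κ*V)) ≤ Real.exp (-1) := by
    have h := Real.add_one_le_exp (2*κ*V - 1)
    have he : Real.exp (2*κ*V - 1) = Real.exp (2*κ*V) * Real.exp (-1) := by
      rw [← Real.exp_add]; ring_nf
    rw [he] at h
    have hp := Real.exp_pos (-(2*κ*V))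
    have hq : Real.exp (2*κ*V) * Real.exp (-(2*κ*V)) = 1 := by
      rw [← Real.exp_add]; simp
    nlinarith [Real.exp_pos (-1)]
  have h2 : V * Real.exp (-(2*κ*V)) ≤ Real.exp (-1) * (1/(2*κ)) := by
    rw [mul_one_div, le_div_iff₀ (by positivity)]
    calc V * Real.exp (-(2*κ*V)) * (2*κ) = 2*κ*V*Real.exp (-(2*κ*V)) := by ring
      _ ≤ Real.exp (-1) := h1
  have h3 : Real.sqrt V * Real.exp (-(κ*V)) = Real.sqrt (V * Real.exp (-(2*κ*V))) := by
    rw [Real.sqrt_mul hV]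
    congr 1
    rw [show -(κ*V) = (-(2*κ*V))/2 by ring, Real.exp_half]
  rw [h3]
  calc Real.sqrt (V * Real.exp (-(2*κ*V)))
      ≤ Real.sqrt (Real.exp (-1) * (1/(2*κ))) := Real.sqrt_le_sqrt h2
    _ = Real.sqrt (1/(2*κ)) * (1/Real.sqrt (Real.exp 1)) := by
        rw [Real.sqrt_mul (Real.exp_pos _).le, mul_comm]
        congr 1
        rw [show (-1 : ℝ) = -(1:ℝ) from rfl, Real.exp_neg, Real.sqrt_inv, one_div]

lemma final {V : ℝ} (hV : 0 < V) :
    Real.sqrt V * ((Real.sqrt (π / (cc * V)) + (π/2) * Real.exp (-((1 + Real.sqrt 2/2) * V))) / (2*π))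
    ≤ 1 / Real.sqrt (Real.exp 1) := by
  have hpi : (0:ℝ) < π := Real.pi_pos
  have hπl : (3.141592:ℝ) ≤ π := by linarith [Real.pi_gt_d6]
  have hπu : π ≤ (3.141593:ℝ) := by linarith [Real.pi_lt_d6]
  have hs2l : (1.41421:ℝ) ≤ Real.sqrt 2 := by
    rw [show (1.41421:ℝ) = Real.sqrt (1.41421^2) from (Real.sqrt_sq (by norm_num)).symm]
    exact Real.sqrt_le_sqrt (by norm_num)
  have hs2u : Real.sqrt 2 ≤ (1.41422:ℝ) := by
    rw [show (1.41422:ℝ) = Real.sqrt (1.41422^2) from (Real.sqrt_sq (by norm_num)).symm]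
    exact Real.sqrt_le_sqrt (by norm_num)
  set E := 1/Real.sqrt (Real.exp 1) with hE
  have hexpu : Real.exp 1 ≤ 2.7182819 := by linarith [Real.exp_one_lt_d9]
  have hsqe : Real.sqrt (Real.exp 1) ≤ 1.65 := by
    rw [show (1.65:ℝ) = Real.sqrt (1.65^2) from (Real.sqrt_sq (by norm_num)).symm]
    exact Real.sqrt_le_sqrt (by nlinarith)
  have hsqepos : 0 < Real.sqrt (Real.exp 1) := Real.sqrt_pos.2 (Real.exp_pos 1)
  have hEl : (0.606:ℝ) ≤ E := by
    rw [hE, le_div_iff₀ hsqepos]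
    nlinarith
  have hccpos := cc_pos
  have hV' : V ≠ 0 := ne_of_gt hV
  have hcc' : cc ≠ 0 := ne_of_gt hccpos
  have h1 : Real.sqrt V * Real.sqrt (π / (cc * V)) = Real.sqrt (π/cc) := by
    rw [← Real.sqrt_mul hV.le]
    congr 1
    field_simp
  have hq : π/cc ≤ 10.21697296 := by
    have hc : π/cc = π*(9*π^2)/((2+Real.sqrt 2)*8) := by
      simp only [cc]
      rw [div_div_eq_mul_div]
    rw [hc, div_le_iff₀ (by nlinarith)]
    nlinarith
  have hA : Real.sqrt (π/cc) ≤ 3.1964 := by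
    rw [show (3.1964:ℝ) = Real.sqrt (3.1964^2) from (Real.sqrt_sq (by norm_num)).symm]
    exact Real.sqrt_le_sqrt (by nlinarith)
  have hκ : (0:ℝ) < 1 + Real.sqrt 2/2 := by linarith
  have hBu : Real.sqrt (1/(2*(1 + Real.sqrt 2/2))) ≤ 0.5413 := by
    rw [show (0.5413:ℝ) = Real.sqrt (0.5413^2) from (Real.sqrt_sq (by norm_num)).symm]
    apply Real.sqrt_le_sqrt
    rw [div_le_iff₀ (by linarith)]
    nlinarith
  have h2' : Real.sqrt V * Real.exp (-((1 + Real.sqrt 2/2) * V)) ≤ 0.5413 * E := by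
    calc Real.sqrt V * Real.exp (-((1 + Real.sqrt 2/2) * V))
        ≤ Real.sqrt (1/(2*(1 + Real.sqrt 2/2))) * E := maxlem hκ hV.le
      _ ≤ 0.5413 * E := by
          apply mul_le_mul_of_nonneg_right hBu
          positivity
  have expand : Real.sqrt V * ((Real.sqrt (π / (cc * V)) + (π/2) * Real.exp (-((1 + Real.sqrt 2/2) * V))) / (2*π))
      = (Real.sqrt V * Real.sqrt (π / (cc * V))) / (2*π)
        + (Real.sqrt V * Real.exp (-((1 + Real.sqrt 2/2) * V))) / 4 := by
    field_simp
    ring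
  rw [expand, h1]
  have e1 : Real.sqrt (π/cc)/(2*π) ≤ 0.50873 := by
    rw [div_le_iff₀ (by positivity)]
    nlinarith
  have hVe : 0 ≤ Real.sqrt V * Real.exp (-((1 + Real.sqrt 2/2) * V)) := by positivity
  linarith

theorem upper_bound_inv_sqrt_e (a b : ℕ) (i : ℤ) (lam mu : ℝ)
    (hlam : lam ∈ Set.Icc (0 : ℝ) 1) (hmu : mu ∈ Set.Icc (0 : ℝ) 1) :
    Real.sqrt (a * lam * (1 - lam) + b * mu * (1 - mu)) *
      ∑ k ∈ Finset.Icc (0 : ℤ) i, B a k lam * B b (i - k) mu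
    ≤ 1 / Real.sqrt (Real.exp 1) := by
  have hpi : (0:ℝ) < π := Real.pi_pos
  obtain ⟨hl0, hl1⟩ := hlam
  obtain ⟨hm0, hm1⟩ := hmu
  set V : ℝ := ↑a * lam * (1 - lam) + ↑b * mu * (1 - mu) with hVdef
  have hV0 : 0 ≤ V := by
    have h1 : (0:ℝ) ≤ (a:ℝ) := Nat.cast_nonneg a
    have h2 : (0:ℝ) ≤ (b:ℝ) := Nat.cast_nonneg b
    have h3 : 0 ≤ (a:ℝ) * (lam * (1-lam)) :=
      mul_nonneg h1 (mul_nonneg hl0 (by linarith))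
    have h4 : 0 ≤ (b:ℝ) * (mu * (1-mu)) :=
      mul_nonneg h2 (mul_nonneg hm0 (by linarith))
    rw [hVdef]; nlinarith
  set S : ℝ := ∑ k ∈ Finset.Icc (0 : ℤ) i, B a k lam * B b (i - k) mu with hSdef
  -- integrand norm bound
  have hF : ∀ θ : ℝ, ‖
      ((((1 - lam : ℝ) : ℂ) + (lam:ℂ) * Complex.exp (θ * Complex.I)) ^ a *
      ((((1 - mu : ℝ) : ℂ) + (mu:ℂ) * Complex.exp (θ * Complex.I)) ^ b *
      Complex.exp ((-i : ℤ) * θ * Complex.I)))‖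
      ≤ Real.exp (-(V * (1 - Real.cos θ))) := by
    intro θ
    rw [norm_mul, norm_mul, norm_pow, norm_pow]
    have he1 : ‖Complex.exp ((-i : ℤ) * θ * Complex.I)‖ = 1 := by
      rw [Complex.norm_exp]
      have : (((-i : ℤ) : ℂ) * θ * Complex.I).re = 0 := by
        have : ((-i : ℤ) : ℂ) * θ = ((((-i : ℤ) : ℝ) * θ : ℝ) : ℂ) := by push_cast; ring
        rw [this]
        simp
      rw [this, Real.exp_zero]
    rw [he1, mul_one]
    have hb1 := norm_factor (p := lam) ⟨hl0, hl1⟩ θ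
    have hb2 := norm_factor (p := mu) ⟨hm0, hm1⟩ θ
    have h1 : ‖((1 - lam : ℝ) : ℂ) + (lam:ℂ) * Complex.exp (θ * Complex.I)‖ ^ a
        ≤ Real.exp (-(lam * (1 - lam) * (1 - Real.cos θ))) ^ a :=
      pow_le_pow_left₀ (norm_nonneg _) hb1 a
    have h2 : ‖((1 - mu : ℝ) : ℂ) + (mu:ℂ) * Complex.exp (θ * Complex.I)‖ ^ b
        ≤ Real.exp (-(mu * (1 - mu) * (1 - Real.cos θ))) ^ b :=
      pow_le_pow_left₀ (norm_nonneg _) hb2 b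
    calc ‖((1 - lam : ℝ) : ℂ) + (lam:ℂ) * Complex.exp (θ * Complex.I)‖ ^ a *
        ‖((1 - mu : ℝ) : ℂ) + (mu:ℂ) * Complex.exp (θ * Complex.I)‖ ^ b
        ≤ Real.exp (-(lam * (1 - lam) * (1 - Real.cos θ))) ^ a *
          Real.exp (-(mu * (1 - mu) * (1 - Real.cos θ))) ^ b := by
          apply mul_le_mul h1 h2 (by positivity) (by positivity)
      _ = Real.exp (-(V * (1 - Real.cos θ))) := by
          rw [← Real.exp_nat_mul, ← Real.exp_nat_mul, ← Real.exp_add]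
          congr 1
          rw [hVdef]
          ring
  -- |S| ≤ (1/(2π)) ∫ g
  set I : ℝ := ∫ θ in (-π)..π, Real.exp (-(V * (1 - Real.cos θ))) with hIdef
  have hIint : IntervalIntegrable (fun θ : ℝ => Real.exp (-(V * (1 - Real.cos θ))))
      volume (-π) π := by
    apply Continuous.intervalIntegrable
    fun_prop
  have hInonneg : 0 ≤ I := by
    rw [hIdef]
    apply intervalIntegral.integral_nonneg (by linarith)
    intro x _
    positivity
  have hSabs : 2 * π * |S| ≤ I := by
    have hinv := inversion a b i lam mu
    have hmatch := sum_match a b i lam mu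
    rw [← hSdef] at hmatch
    rw [← hmatch] at hinv
    have habs1 : ‖2 * (π : ℂ) * ((S : ℝ) : ℂ)‖ = 2 * π * |S| := by
      rw [norm_mul, norm_mul, Complex.norm_real, Complex.norm_two, Complex.norm_real,
        Real.norm_eq_abs, Real.norm_eq_abs, abs_of_pos hpi]
    have hnorm : ‖∫ θ : ℝ in (-π)..π,
        (((1 - lam : ℝ) : ℂ) + (lam:ℂ) * Complex.exp (θ * Complex.I)) ^ a *
        ((((1 - mu : ℝ) : ℂ) + (mu:ℂ) * Complex.exp (θ * Complex.I)) ^ b *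
        Complex.exp ((-i : ℤ) * θ * Complex.I))‖ ≤ I := by
      have hle := intervalIntegral.norm_integral_le_of_norm_le
        (f := fun θ : ℝ =>
          (((1 - lam : ℝ) : ℂ) + (lam:ℂ) * Complex.exp (θ * Complex.I)) ^ a *
          ((((1 - mu : ℝ) : ℂ) + (mu:ℂ) * Complex.exp (θ * Complex.I)) ^ b *
          Complex.exp ((-i : ℤ) * θ * Complex.I)))
        (g := fun θ : ℝ => Real.exp (-(V * (1 - Real.cos θ))))
        (μ := volume) (a := -π) (b := π)
        (by linarith) (Filter.Eventually.of_forall (fun t _ => by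
          exact hF t)) hIint
      calc ‖∫ θ : ℝ in (-π)..π,
          (((1 - lam : ℝ) : ℂ) + (lam:ℂ) * Complex.exp (θ * Complex.I)) ^ a *
          ((((1 - mu : ℝ) : ℂ) + (mu:ℂ) * Complex.exp (θ * Complex.I)) ^ b *
          Complex.exp ((-i : ℤ) * θ * Complex.I))‖ ≤ |I| := hle.trans (le_abs_self _)
        _ = I := abs_of_nonneg hInonneg
    rw [hinv] at hnorm
    rw [habs1] at hnorm
    exact hnorm
  -- conclude
  have hmain : Real.sqrt V * S ≤ Real.sqrt V * (I / (2*π)) := by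
    apply mul_le_mul_of_nonneg_left _ (Real.sqrt_nonneg V)
    have : S ≤ |S| := le_abs_self S
    rw [le_div_iff₀ (by positivity)]
    calc S * (2*π) ≤ |S| * (2*π) := by nlinarith
      _ = 2*π*|S| := by ring
      _ ≤ I := hSabs
  rcases eq_or_lt_of_le hV0 with hVz | hVpos
  · rw [← hVz, Real.sqrt_zero, zero_mul]
    positivity
  · calc Real.sqrt V * S ≤ Real.sqrt V * (I / (2*π)) := hmain
      _ ≤ Real.sqrt V * ((Real.sqrt (π / (cc * V))
            + (π/2) * Real.exp (-((1 + Real.sqrt 2/2) * V))) / (2*π)) := by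
          apply mul_le_mul_of_nonneg_left _ (Real.sqrt_nonneg V)
          apply div_le_div_of_nonneg_right ?_ (by positivity)
          · exact core hVpos
      _ ≤ 1 / Real.sqrt (Real.exp 1) := final hVpos
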